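/- arXiv:1001.3403 — 3 statements merged into one kernel-verified Lean document; each statement's English description precedes it below -/
import Mathlib

section
/- Khintchine–Groshev theorem (convergence part): Let m ≥ 1 be an integer and ε > 0. The set of vectors v ∈ ℝ^m for which there exist infinitely many q ∈ ℤ^m \ {0} such that for some p ∈ ℤ one has |p + v·q| < (max_{1≤i≤m} |q_i|)^{-(m+ε)} has Lebesgue measure zero. -/
open MeasureTheory Filter ENNReal

lemma KG_tsum_pi_prod (n : ℕ) (g : ℤ → ℝ≥0∞) :
    (∑' q : (Fin n → ℤ), ∏ i, g (q i)) = (∑' k : ℤ, g k) ^ n := by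
  induction n with
  | zero => simp [tsum_fintype]
  | succ n ih =>
      rw [← ((Fin.consEquiv (fun _ : Fin (n+1) => ℤ)).tsum_eq (fun q : Fin (n+1) → ℤ => ∏ i, g (q i)))]
      have h : ∀ p : ℤ × (Fin n → ℤ),
          (∏ i, g ((Fin.consEquiv (fun _ : Fin (n+1) => ℤ)) p i)) = g p.1 * ∏ i, g (p.2 i) := by
        intro p
        rw [Fin.prod_univ_succ]
        simp [Fin.consEquiv]
      simp_rw [h]
      rw [ENNReal.tsum_prod']
      simp_rw [ENNReal.tsum_mul_left]
      rw [ENNReal.tsum_mul_right, ih, pow_succ, mul_comm]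
lemma KG_det (m : ℕ) (i₀ : Fin m) (c : Fin m → ℝ) :
    ((1 : Matrix (Fin m) (Fin m) ℝ).updateRow i₀ c).det = c i₀ := by
  have hc : c = ∑ k, c k • (1 : Matrix (Fin m) (Fin m) ℝ) k := by
    funext j
    simp [Matrix.one_apply]
  conv_lhs => rw [hc]
  rw [Matrix.det_updateRow_sum]
  simp
lemma KG_key (m N : ℕ) (hN : 1 ≤ N) (q : Fin m → ℤ) (i₀ : Fin m)
    (hi₀ : ∀ i, (q i).natAbs ≤ (q i₀).natAbs) (hq0 : q i₀ ≠ 0)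
    (δ : ℝ) (hδ0 : 0 < δ) (hδ1 : δ ≤ 1) :
    volume {v : Fin m → ℝ | (∀ i, v i ∈ Set.Ioo (-(N:ℝ)) (N:ℝ)) ∧ ∃ p : ℤ,
        |(p:ℝ) + ∑ i, v i * (q i : ℝ)| < δ}
      ≤ ((2*N*m+3 : ℕ) : ℝ≥0∞) * ENNReal.ofReal (2*N) ^ (m-1) * (2 * ENNReal.ofReal δ) := by
  set Q : ℕ := (q i₀).natAbs with hQdef
  have hQ1 : 1 ≤ Q := Int.natAbs_pos.mpr hq0
  have hQR : (1:ℝ) ≤ (Q:ℝ) := by exact_mod_cast hQ1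
  set K : ℕ := N*m*Q+1 with hKdef
  have hK' : (K:ℝ) = (m:ℝ)*N*Q + 1 := by rw [hKdef]; push_cast; ring
  set M : Matrix (Fin m) (Fin m) ℝ :=
    (1 : Matrix (Fin m) (Fin m) ℝ).updateRow i₀ (fun j => (q j : ℝ)) with hMdef
  set T : (Fin m → ℝ) →ₗ[ℝ] (Fin m → ℝ) := Matrix.toLin' M with hTdef
  have hdet : LinearMap.det T = (q i₀ : ℝ) := by
    rw [hTdef, LinearMap.det_toLin', hMdef, KG_det]
  have hdet0 : LinearMap.det T ≠ 0 := by
    rw [hdet]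
    exact_mod_cast hq0
  have hT : ∀ (v : Fin m → ℝ) (i : Fin m),
      T v i = if i = i₀ then ∑ j, (q j : ℝ) * v j else v i := by
    intro v i
    rw [hTdef, Matrix.toLin'_apply]
    by_cases h : i = i₀
    · subst h
      simp [Matrix.mulVec, dotProduct, hMdef, Matrix.updateRow_self]
    · simp [Matrix.mulVec, dotProduct, hMdef, Matrix.updateRow_ne h,
        Matrix.one_apply, h]
  set E : Set ℝ := ⋃ p ∈ Finset.Icc (-(K:ℤ)) (K:ℤ),
    Set.Ioo (-(p:ℝ) - δ) (-(p:ℝ) + δ) with hEdef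
  set S : Set (Fin m → ℝ) :=
    Set.pi Set.univ (fun i => if i = i₀ then E else Set.Ioo (-(N:ℝ)) (N:ℝ)) with hSdef
  -- inclusion
  have hsub : {v : Fin m → ℝ | (∀ i, v i ∈ Set.Ioo (-(N:ℝ)) (N:ℝ)) ∧ ∃ p : ℤ,
        |(p:ℝ) + ∑ i, v i * (q i : ℝ)| < δ} ⊆ T ⁻¹' S := by
    rintro v ⟨hbox, p, hp⟩
    have hx : |∑ i, v i * (q i : ℝ)| ≤ (m:ℝ) * N * Q := by
      calc |∑ i, v i * (q i : ℝ)| ≤ ∑ i, |v i * (q i : ℝ)| :=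
            Finset.abs_sum_le_sum_abs _ _
        _ ≤ ∑ _i : Fin m, (N:ℝ) * Q := by
            refine Finset.sum_le_sum fun i _ => ?_
            rw [abs_mul]
            have h1 : |v i| ≤ (N:ℝ) := by
              have := hbox i
              rw [Set.mem_Ioo] at this
              rw [abs_le]
              constructor <;> linarith [this.1, this.2]
            have h2 : |(q i : ℝ)| ≤ (Q:ℝ) := by
              rw [← Int.cast_abs, Int.abs_eq_natAbs]
              exact_mod_cast hi₀ i
            exact mul_le_mul h1 h2 (abs_nonneg _) (by positivity)
        _ = (m:ℝ) * N * Q := by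
            rw [Finset.sum_const, Finset.card_univ, Fintype.card_fin, nsmul_eq_mul]
            ring
    have hpK : p ∈ Finset.Icc (-(K:ℤ)) (K:ℤ) := by
      have habs : |(p:ℝ)| < (K:ℝ) := by
        have h1 : |(p:ℝ)| ≤ |(p:ℝ) + ∑ i, v i * (q i : ℝ)| + |∑ i, v i * (q i : ℝ)| := by
          calc |(p:ℝ)| = |((p:ℝ) + ∑ i, v i * (q i : ℝ)) - ∑ i, v i * (q i : ℝ)| := by
                ring_nf
            _ ≤ _ := abs_sub _ _
        rw [hK']
        linarith
      rw [abs_lt] at habs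
      have h2 : -(K:ℤ) < p := by exact_mod_cast habs.1
      have h3 : p < (K:ℤ) := by exact_mod_cast habs.2
      rw [Finset.mem_Icc]
      omega
    rw [Set.mem_preimage, hSdef, Set.mem_univ_pi]
    intro i
    by_cases h : i = i₀
    · subst h
      rw [hT]
      simp only [eq_self_iff_true, if_true]
      have hsum : ∑ j, (q j : ℝ) * v j = ∑ j, v j * (q j : ℝ) :=
        Finset.sum_congr rfl fun j _ => mul_comm _ _
      refine Set.mem_biUnion hpK ?_
      rw [abs_lt] at hp
      rw [Set.mem_Ioo, hsum]
      constructor <;> [linarith [hp.1]; linarith [hp.2]]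
    · rw [hT]
      simp only [if_neg h]
      exact hbox i
  -- measure computation
  have hmeas : volume (T ⁻¹' S) = ENNReal.ofReal |(LinearMap.det T)⁻¹| * volume S :=
    Measure.addHaar_preimage_linearMap volume hdet0 S
  have hE : volume E ≤ ((2*K+1 : ℕ) : ℝ≥0∞) * ENNReal.ofReal (2*δ) := by
    rw [hEdef]
    refine le_trans (measure_biUnion_finset_le _ _) ?_
    have : ∀ p : ℤ, volume (Set.Ioo (-(p:ℝ) - δ) (-(p:ℝ) + δ)) = ENNReal.ofReal (2*δ) := by
      intro p
      rw [Real.volume_Ioo]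
      congr 1
      ring
    simp_rw [this]
    rw [Finset.sum_const, nsmul_eq_mul]
    have hcard : (Finset.Icc (-(K:ℤ)) (K:ℤ)).card = 2*K+1 := by
      rw [Int.card_Icc]
      omega
    rw [hcard]
  have hS : volume S ≤ ((2*K+1 : ℕ) : ℝ≥0∞) * ENNReal.ofReal (2*δ) *
      ENNReal.ofReal (2*N) ^ (m-1) := by
    rw [hSdef, volume_pi_pi]
    rw [← Finset.mul_prod_erase Finset.univ _ (Finset.mem_univ i₀)]
    have h1 : ∀ i ∈ Finset.univ.erase i₀,
        volume (if i = i₀ then E else Set.Ioo (-(N:ℝ)) (N:ℝ)) = ENNReal.ofReal (2*N) := by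
      intro i hi
      rw [if_neg (Finset.ne_of_mem_erase hi), Real.volume_Ioo]
      congr 1
      ring
    rw [Finset.prod_congr rfl h1, Finset.prod_const,
      Finset.card_erase_of_mem (Finset.mem_univ i₀), Finset.card_univ, Fintype.card_fin]
    rw [if_pos rfl]
    gcongr
  -- final arithmetic
  have habs2 : |((q i₀ : ℤ) : ℝ)| = (Q:ℝ) := by
    rw [hQdef, Nat.cast_natAbs, Int.cast_abs]
  have habsdet : |(LinearMap.det T)⁻¹| = (Q:ℝ)⁻¹ := by
    rw [hdet, abs_inv, habs2]
  have hone : ENNReal.ofReal ((Q:ℝ)⁻¹) * ENNReal.ofReal ((Q:ℝ)) = 1 := by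
    rw [← ENNReal.ofReal_mul (by positivity), inv_mul_cancel₀ (by positivity),
      ENNReal.ofReal_one]
  calc volume {v : Fin m → ℝ | (∀ i, v i ∈ Set.Ioo (-(N:ℝ)) (N:ℝ)) ∧ ∃ p : ℤ,
        |(p:ℝ) + ∑ i, v i * (q i : ℝ)| < δ}
      ≤ volume (T ⁻¹' S) := measure_mono hsub
    _ = ENNReal.ofReal ((Q:ℝ)⁻¹) * volume S := by rw [hmeas, habsdet]
    _ ≤ ENNReal.ofReal ((Q:ℝ)⁻¹) * (((2*K+1 : ℕ) : ℝ≥0∞) * ENNReal.ofReal (2*δ) *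
        ENNReal.ofReal (2*N) ^ (m-1)) := by gcongr
    _ ≤ ENNReal.ofReal ((Q:ℝ)⁻¹) * ((((2*N*m+3)*Q : ℕ) : ℝ≥0∞) * ENNReal.ofReal (2*δ) *
        ENNReal.ofReal (2*N) ^ (m-1)) := by
          gcongr
          have : 2*K+1 ≤ (2*N*m+3)*Q := by
            rw [hKdef]
            nlinarith [hQ1]
          exact_mod_cast this
    _ = (ENNReal.ofReal ((Q:ℝ)⁻¹) * ENNReal.ofReal ((Q:ℝ))) *
        (((2*N*m+3 : ℕ) : ℝ≥0∞) * ENNReal.ofReal (2*δ) * ENNReal.ofReal (2*N) ^ (m-1)) := by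
          rw [Nat.cast_mul, ← ENNReal.ofReal_natCast Q]
          ring
    _ = ((2*N*m+3 : ℕ) : ℝ≥0∞) * ENNReal.ofReal (2*N) ^ (m-1) * (2 * ENNReal.ofReal δ) := by
          rw [hone, one_mul]
          rw [show (2:ℝ)*δ = 2*δ from rfl, ENNReal.ofReal_mul (by norm_num : (0:ℝ) ≤ 2),
            ENNReal.ofReal_ofNat]
          ring
lemma KG_delta_le (m : ℕ) (hm : 1 ≤ m) (ε : ℝ) (hε : 0 < ε) (q : Fin m → ℤ) (hq : q ≠ 0) :
    ((Finset.univ.sup fun i => (q i).natAbs : ℕ) : ℝ) ^ (-((m : ℝ) + ε)) ≤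
      ∏ i, (max 1 |((q i : ℤ) : ℝ)|) ^ (-(1 + ε / m)) := by
  have hmn : Nonempty (Fin m) := ⟨⟨0, hm⟩⟩
  set Q : ℕ := Finset.univ.sup fun i => (q i).natAbs with hQdef
  obtain ⟨j, hj⟩ := Function.ne_iff.mp hq
  have hQ1 : 1 ≤ Q := le_trans (Int.natAbs_pos.mpr hj) (Finset.le_sup (f := fun i => (q i).natAbs) (Finset.mem_univ j))
  have hQR : (1:ℝ) ≤ (Q:ℝ) := by exact_mod_cast hQ1
  have hs : (0:ℝ) < 1 + ε / m := by positivity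
  have hb : ∀ i, (0:ℝ) ≤ max 1 |((q i : ℤ) : ℝ)| := fun i => le_trans zero_le_one (le_max_left _ _)
  have hbQ : ∀ i, max 1 |((q i : ℤ) : ℝ)| ≤ (Q:ℝ) := by
    intro i
    refine max_le hQR ?_
    rw [← Int.cast_abs, Int.abs_eq_natAbs]
    exact_mod_cast Finset.le_sup (f := fun i => (q i).natAbs) (Finset.mem_univ i)
  have hprod : ∏ i, (max 1 |((q i : ℤ) : ℝ)|) ^ (1 + ε / m) ≤ (Q:ℝ) ^ ((m:ℝ) + ε) := by
    calc ∏ i, (max 1 |((q i : ℤ) : ℝ)|) ^ (1 + ε / m)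
        ≤ ∏ _i : Fin m, (Q:ℝ) ^ (1 + ε / m) := by
          refine Finset.prod_le_prod (fun i _ => Real.rpow_nonneg (hb i) _) ?_
          exact fun i _ => Real.rpow_le_rpow (hb i) (hbQ i) (le_of_lt hs)
      _ = ((Q:ℝ) ^ (1 + ε / m)) ^ (m:ℕ) := by
          rw [Finset.prod_const, Finset.card_univ, Fintype.card_fin]
      _ = (Q:ℝ) ^ ((m:ℝ) + ε) := by
          rw [← Real.rpow_natCast ((Q:ℝ) ^ (1 + ε / m)) m, ← Real.rpow_mul (by linarith)]
          congr 1
          have hm0 : (m:ℝ) ≠ 0 := by positivity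
          field_simp
  have hLHS : ((Q:ℕ) : ℝ) ^ (-((m : ℝ) + ε)) = ((Q:ℝ) ^ ((m:ℝ) + ε))⁻¹ := by
    rw [Real.rpow_neg (by linarith)]
  have hRHS : ∏ i, (max 1 |((q i : ℤ) : ℝ)|) ^ (-(1 + ε / m)) =
      (∏ i, (max 1 |((q i : ℤ) : ℝ)|) ^ (1 + ε / m))⁻¹ := by
    rw [← Finset.prod_inv_distrib]
    exact Finset.prod_congr rfl fun i _ => Real.rpow_neg (hb i) _
  rw [hLHS, hRHS]
  have hpos : (0:ℝ) < ∏ i, (max 1 |((q i : ℤ) : ℝ)|) ^ (1 + ε / m) :=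
    Finset.prod_pos fun i _ => Real.rpow_pos_of_pos (lt_of_lt_of_le zero_lt_one (le_max_left _ _)) _
  exact inv_anti₀ hpos hprod
lemma KG_summable {s : ℝ} (hs : 1 < s) :
    Summable (fun k : ℤ => (max 1 |(k : ℝ)|) ^ (-s)) := by
  have hnat : Summable (fun n : ℕ => (max 1 |((n : ℤ) : ℝ)|) ^ (-s)) := by
    rw [← summable_nat_add_iff 1]
    have h1 : Summable (fun n : ℕ => ((n : ℝ)) ^ (-s)) :=
      Real.summable_nat_rpow.mpr (by linarith)
    have h2 := (summable_nat_add_iff (f := fun n : ℕ => ((n : ℝ)) ^ (-s)) 1).mpr h1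
    refine h2.congr fun n => ?_
    have hmax : max 1 |(((n + 1 : ℕ) : ℤ) : ℝ)| = ((n + 1 : ℕ) : ℝ) := by
      rw [abs_of_nonneg (by positivity), max_eq_right]
      · norm_cast
      · push_cast
        linarith [Nat.cast_nonneg (α := ℝ) n]
    rw [hmax]
  refine Summable.of_nat_of_neg hnat ?_
  refine hnat.congr fun n => ?_
  simp

/-- Khintchine–Groshev theorem (convergence part): for `m ≥ 1` and `ε > 0`, the set of
`v ∈ ℝ^m` admitting infinitely many `q ∈ ℤ^m \ {0}` such that for some `p ∈ ℤ`,
`|p + v·q| < Q^{-(m+ε)}` (with `Q` the sup-norm of `q`) has Lebesgue measure zero. -/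
theorem khintchine_groshev_convergence (m : ℕ) (hm : 1 ≤ m) (ε : ℝ) (hε : 0 < ε) :
    volume {v : Fin m → ℝ |
      {q : Fin m → ℤ | q ≠ 0 ∧ ∃ p : ℤ,
        |(p : ℝ) + ∑ i, v i * (q i : ℝ)| <
          ((Finset.univ.sup fun i => (q i).natAbs : ℕ) : ℝ) ^ (-((m : ℝ) + ε))}.Infinite}
      = 0 := by
  haveI hmn : Nonempty (Fin m) := ⟨⟨0, hm⟩⟩
  set Tset := {v : Fin m → ℝ | {q : Fin m → ℤ | q ≠ 0 ∧ ∃ p : ℤ,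
        |(p : ℝ) + ∑ i, v i * (q i : ℝ)| <
          ((Finset.univ.sup fun i => (q i).natAbs : ℕ) : ℝ) ^ (-((m : ℝ) + ε))}.Infinite}
    with hTset
  have key0 : ∀ n : ℕ, 1 ≤ n →
      volume (Tset ∩ {v : Fin m → ℝ | ∀ i, v i ∈ Set.Ioo (-(n:ℝ)) (n:ℝ)}) = 0 := by
    intro n hn
    set g : ℤ → ℝ≥0∞ := fun k => ENNReal.ofReal ((max 1 |(k : ℝ)|) ^ (-(1 + ε / m))) with hg
    set A : (Fin m → ℤ) → Set (Fin m → ℝ) := fun q =>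
      {v : Fin m → ℝ | (∀ i, v i ∈ Set.Ioo (-(n:ℝ)) (n:ℝ)) ∧ q ≠ 0 ∧ ∃ p : ℤ,
        |(p : ℝ) + ∑ i, v i * (q i : ℝ)| <
          ((Finset.univ.sup fun i => (q i).natAbs : ℕ) : ℝ) ^ (-((m : ℝ) + ε))} with hA
    have hsub : Tset ∩ {v : Fin m → ℝ | ∀ i, v i ∈ Set.Ioo (-(n:ℝ)) (n:ℝ)} ⊆
        limsup A cofinite := by
      rintro v ⟨hinf, hbox⟩
      rw [mem_limsup_iff_frequently_mem, frequently_cofinite_iff_infinite]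
      exact Set.Infinite.mono (fun q hq => ⟨hbox, hq⟩) hinf
    refine measure_mono_null hsub (measure_limsup_cofinite_eq_zero ?_)
    set C : ℝ≥0∞ := ((2*n*m+3 : ℕ) : ℝ≥0∞) * ENNReal.ofReal (2*n) ^ (m-1) * 2 with hC
    have hbound : ∀ q : Fin m → ℤ, volume (A q) ≤ C * ∏ i, g (q i) := by
      intro q
      by_cases hq : q = 0
      · have hempty : A q = ∅ := by
          subst hq
          ext v
          simp [hA]
        rw [hempty]
        simp
      · obtain ⟨j, hj⟩ := Function.ne_iff.mp hq
        have hj' : q j ≠ 0 := hj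
        set Q : ℕ := Finset.univ.sup fun i => (q i).natAbs with hQdef
        have hQ1 : 1 ≤ Q := le_trans (Int.natAbs_pos.mpr hj')
          (Finset.le_sup (f := fun i => (q i).natAbs) (Finset.mem_univ j))
        have hQR : (1:ℝ) ≤ (Q:ℝ) := by exact_mod_cast hQ1
        obtain ⟨i₀, -, hsup⟩ := Finset.exists_mem_eq_sup Finset.univ Finset.univ_nonempty
          (fun i => (q i).natAbs)
        have hi₀ : ∀ i, (q i).natAbs ≤ (q i₀).natAbs := fun i =>
          hsup ▸ Finset.le_sup (f := fun i => (q i).natAbs) (Finset.mem_univ i)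
        have hqi₀ : q i₀ ≠ 0 := by
          rw [← Int.natAbs_pos, ← hsup]
          exact lt_of_lt_of_le (Int.natAbs_pos.mpr hj')
            (Finset.le_sup (f := fun i => (q i).natAbs) (Finset.mem_univ j))
        have hδ0 : 0 < ((Q:ℕ) : ℝ) ^ (-((m : ℝ) + ε)) :=
          Real.rpow_pos_of_pos (by linarith) _
        have hδ1 : ((Q:ℕ) : ℝ) ^ (-((m : ℝ) + ε)) ≤ 1 := by
          refine Real.rpow_le_one_of_one_le_of_nonpos hQR ?_
          have hmR : (1:ℝ) ≤ (m:ℝ) := by exact_mod_cast hm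
          linarith
        calc volume (A q)
            ≤ volume {v : Fin m → ℝ | (∀ i, v i ∈ Set.Ioo (-(n:ℝ)) (n:ℝ)) ∧ ∃ p : ℤ,
              |(p : ℝ) + ∑ i, v i * (q i : ℝ)| < ((Q:ℕ) : ℝ) ^ (-((m : ℝ) + ε))} :=
              measure_mono fun v hv => ⟨hv.1, hv.2.2⟩
          _ ≤ ((2*n*m+3 : ℕ) : ℝ≥0∞) * ENNReal.ofReal (2*n) ^ (m-1) *
              (2 * ENNReal.ofReal (((Q:ℕ) : ℝ) ^ (-((m : ℝ) + ε)))) :=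
              KG_key m n hn q i₀ hi₀ hqi₀ _ hδ0 hδ1
          _ = C * ENNReal.ofReal (((Q:ℕ) : ℝ) ^ (-((m : ℝ) + ε))) := by rw [hC]; ring
          _ ≤ C * ∏ i, g (q i) := by
              gcongr
              have h1 := ENNReal.ofReal_le_ofReal (KG_delta_le m hm ε hε q hq)
              rwa [ENNReal.ofReal_prod_of_nonneg
                (fun i _ => Real.rpow_nonneg (le_trans zero_le_one (le_max_left _ _)) _)] at h1
    have hgsum : (∑' k : ℤ, g k) ≠ ⊤ := by
      rw [hg]
      rw [← ENNReal.ofReal_tsum_of_nonneg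
        (fun k => Real.rpow_nonneg (le_trans zero_le_one (le_max_left _ _)) _)
        (KG_summable (by
          have hεm : (0:ℝ) < ε / m := by positivity
          linarith))]
      exact ENNReal.ofReal_ne_top
    have hle : (∑' q : (Fin m → ℤ), volume (A q)) ≤ C * (∑' k : ℤ, g k) ^ m := by
      calc (∑' q : (Fin m → ℤ), volume (A q))
          ≤ ∑' q : (Fin m → ℤ), C * ∏ i, g (q i) := ENNReal.tsum_le_tsum hbound
        _ = C * (∑' k : ℤ, g k) ^ m := by rw [ENNReal.tsum_mul_left, KG_tsum_pi_prod]
    refine ne_top_of_le_ne_top ?_ hle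
    refine ENNReal.mul_ne_top ?_ (ENNReal.pow_ne_top hgsum)
    rw [hC]
    exact ENNReal.mul_ne_top
      (ENNReal.mul_ne_top (ENNReal.natCast_ne_top _)
        (ENNReal.pow_ne_top ENNReal.ofReal_ne_top)) ENNReal.ofNat_ne_top
  have hcover : Tset ⊆ ⋃ n : ℕ,
      Tset ∩ {v : Fin m → ℝ | ∀ i, v i ∈ Set.Ioo (-((n+1:ℕ):ℝ)) ((n+1:ℕ):ℝ)} := by
    intro v hv
    refine Set.mem_iUnion.mpr ⟨⌈‖v‖⌉₊, hv, fun i => ?_⟩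
    have h1 : |v i| ≤ ‖v‖ := by
      rw [← Real.norm_eq_abs]
      exact norm_le_pi_norm v i
    have h2 : ‖v‖ ≤ (⌈‖v‖⌉₊ : ℝ) := Nat.le_ceil _
    rw [abs_le] at h1
    rw [Set.mem_Ioo]
    push_cast
    constructor <;> [linarith [h1.1]; linarith [h1.2]]
  refine measure_mono_null hcover (measure_iUnion_null fun n => ?_)
  exact key0 (n+1) (Nat.le_add_left 1 n)
end

section
/- Let a, b, c ∈ ℝ and n ≥ 1 an integer, and let T = {a^{s₁} b^{s₂} c^{s₃} : s₁, s₂, s₃ ∈ ℤ, 0 ≤ s_i ≤ n−1}. Then the union a·T ∪ b·T ∪ c·T is contained in the set T' = {a^{s₁} b^{s₂} c^{s₃} : 0 ≤ s_i ≤ n}, so the number of distinct received directions at the second receiver is at most (n+1)³. Moreover, if a, b, c are algebraically independent over ℚ, then T has exactly n³ elements; hence the alignment efficiency satisfies |T| / |T'| ≥ (n/(n+1))³. -/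
lemma mono_inj (a b c : ℝ) (h : AlgebraicIndependent ℚ ![a, b, c]) :
    Function.Injective (fun s : Fin 3 → ℕ => a ^ s 0 * b ^ s 1 * c ^ s 2) := by
  intro s t hst
  have key : ∀ s : Fin 3 → ℕ,
      (MvPolynomial.aeval ![a, b, c])
        (MvPolynomial.monomial (Finsupp.equivFunOnFinite.symm s) (1 : ℚ)) =
      a ^ s 0 * b ^ s 1 * c ^ s 2 := by
    intro s
    rw [MvPolynomial.aeval_monomial]
    rw [Finsupp.prod_fintype _ _ (fun i => pow_zero _)]
    simp [Fin.prod_univ_three, mul_assoc]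
  have hinj : Function.Injective (MvPolynomial.aeval ![a, b, c] :
      MvPolynomial (Fin 3) ℚ →ₐ[ℚ] ℝ) := h
  have := hinj (a₁ := MvPolynomial.monomial (Finsupp.equivFunOnFinite.symm s) (1 : ℚ))
    (a₂ := MvPolynomial.monomial (Finsupp.equivFunOnFinite.symm t) (1 : ℚ))
    (by rw [key, key]; exact hst)
  have := MvPolynomial.monomial_left_injective (one_ne_zero) this
  exact Finsupp.equivFunOnFinite.symm.injective this

/-- Partial alignment at two receivers: with `T = {a^{s₁}b^{s₂}c^{s₃} : 0 ≤ sᵢ ≤ n−1}`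
and `T' = {a^{s₁}b^{s₂}c^{s₃} : 0 ≤ sᵢ ≤ n}`, the union `a·T ∪ b·T ∪ c·T` is contained
in `T'`, so the received directions at the second receiver number at most `(n+1)³`;
moreover if `a, b, c` are algebraically independent over `ℚ` then `|T| = n³` and the
alignment efficiency satisfies `|T|/|T'| ≥ (n/(n+1))³`. -/
theorem partial_alignment_efficiency (a b c : ℝ) (n : ℕ) (hn : 1 ≤ n)
    (T T' : Set ℝ)
    (hT : T = (fun s : Fin 3 → ℕ => a ^ s 0 * b ^ s 1 * c ^ s 2) '' {s | ∀ i, s i < n})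
    (hT' : T' = (fun s : Fin 3 → ℕ => a ^ s 0 * b ^ s 1 * c ^ s 2) '' {s | ∀ i, s i ≤ n}) :
    ((a * ·) '' T ∪ (b * ·) '' T ∪ (c * ·) '' T ⊆ T' ∧ T'.ncard ≤ (n + 1) ^ 3) ∧
    (AlgebraicIndependent ℚ ![a, b, c] →
      T.ncard = n ^ 3 ∧ ((n : ℝ) / (n + 1)) ^ 3 ≤ (T.ncard : ℝ) / (T'.ncard : ℝ)) := by
  set f : (Fin 3 → ℕ) → ℝ := fun s => a ^ s 0 * b ^ s 1 * c ^ s 2 with hf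
  have hS : {s : Fin 3 → ℕ | ∀ i, s i < n} =
      ↑(Fintype.piFinset fun _ : Fin 3 => Finset.range n) := by
    ext s; simp [Finset.mem_range]
  have hS' : {s : Fin 3 → ℕ | ∀ i, s i ≤ n} =
      ↑(Fintype.piFinset fun _ : Fin 3 => Finset.range (n + 1)) := by
    ext s; simp [Finset.mem_range, Nat.lt_succ_iff]
  have hScard : ({s : Fin 3 → ℕ | ∀ i, s i < n}).ncard = n ^ 3 := by
    rw [hS, Set.ncard_coe_finset, Fintype.card_piFinset]
    simp [Finset.card_range]
  have hS'card : ({s : Fin 3 → ℕ | ∀ i, s i ≤ n}).ncard = (n + 1) ^ 3 := by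
    rw [hS', Set.ncard_coe_finset, Fintype.card_piFinset]
    simp [Finset.card_range]
  have hS'fin : ({s : Fin 3 → ℕ | ∀ i, s i ≤ n}).Finite := by
    rw [hS']; exact (Fintype.piFinset _).finite_toSet
  have hSfin : ({s : Fin 3 → ℕ | ∀ i, s i < n}).Finite := by
    rw [hS]; exact (Fintype.piFinset _).finite_toSet
  have hmem : ∀ s : Fin 3 → ℕ, (∀ i, s i < n) →
      (a * f s ∈ T' ∧ b * f s ∈ T' ∧ c * f s ∈ T') := by
    intro s hs
    have h0 := hs 0; have h1 := hs 1; have h2 := hs 2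
    rw [hT']
    refine ⟨⟨![s 0 + 1, s 1, s 2], ?_, ?_⟩, ⟨![s 0, s 1 + 1, s 2], ?_, ?_⟩,
      ⟨![s 0, s 1, s 2 + 1], ?_, ?_⟩⟩
    · intro i; clear hS hS' hScard hS'card hSfin hS'fin; fin_cases i <;> simp <;> omega
    · simp [hf]; ring
    · intro i; clear hS hS' hScard hS'card hSfin hS'fin; fin_cases i <;> simp <;> omega
    · simp [hf]; ring
    · intro i; clear hS hS' hScard hS'card hSfin hS'fin; fin_cases i <;> simp <;> omega
    · simp [hf]; ring
  have hsub : (a * ·) '' T ∪ (b * ·) '' T ∪ (c * ·) '' T ⊆ T' := by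
    rintro x ((⟨y, hy, rfl⟩ | ⟨y, hy, rfl⟩) | ⟨y, hy, rfl⟩) <;>
      rw [hT] at hy <;> obtain ⟨s, hs, rfl⟩ := hy
    · exact (hmem s hs).1
    · exact (hmem s hs).2.1
    · exact (hmem s hs).2.2
  have hT'le : T'.ncard ≤ (n + 1) ^ 3 := by
    rw [hT', ← hS'card]
    exact Set.ncard_image_le hS'fin
  refine ⟨⟨hsub, hT'le⟩, fun hAI => ?_⟩
  have hinj := mono_inj a b c hAI
  have hTcard : T.ncard = n ^ 3 := by
    rw [hT, Set.ncard_image_of_injective _ hinj, hScard]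
  refine ⟨hTcard, ?_⟩
  have hT'pos : 0 < T'.ncard := by
    rw [hT', Set.ncard_pos (hS'fin.image f)]
    exact ⟨f (fun _ => 0), ⟨fun _ => 0, fun i => Nat.zero_le n, rfl⟩⟩
  rw [hTcard, div_pow]
  have h1 : (0 : ℝ) < T'.ncard := by exact_mod_cast hT'pos
  have h2 : (T'.ncard : ℝ) ≤ ((n : ℝ) + 1) ^ 3 := by exact_mod_cast hT'le
  calc ((n : ℝ)) ^ 3 / ((n : ℝ) + 1) ^ 3 ≤ (n : ℝ) ^ 3 / T'.ncard := by
        apply div_le_div_of_nonneg_left (by positivity) h1 h2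
    _ = ((n ^ 3 : ℕ) : ℝ) / T'.ncard := by push_cast; ring
end

section
/- Let K ≥ 2 and n ≥ 1 be integers, and let all K² channel gains (h_{jl})_{j,l∈{1,…,K}} be algebraically independent over ℚ. With T_i the set of products ∏_{j≠l} h_{jl}^{s_{jl}} satisfying 0 ≤ s_{ji} ≤ n−1 for j ≠ i and 0 ≤ s_{jl} ≤ n otherwise (off-diagonal pairs only), and T_r the set of products ∏_{j≠l} h_{jl}^{s_{jl}} with 0 ≤ s_{jl} ≤ n, the sets h_{ii}·T_i and T_r are disjoint, and moreover the union (h_{ii}·T_i) ∪ T_r is a set of pairwise distinct real numbers that are linearly independent over ℚ. -/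
section Aux

lemma monomials_linearIndependent {ι : Type*} [Fintype ι] (x : ι → ℝ)
    (hx : AlgebraicIndependent ℚ x) :
    LinearIndependent ℚ (fun e : ι → ℕ => ∏ j, x j ^ e j) := by
  have hinj : Function.Injective (MvPolynomial.aeval x : MvPolynomial ι ℚ →ₐ[ℚ] ℝ) := hx
  have hb := (MvPolynomial.basisMonomials ι ℚ).linearIndependent
  have h2 := hb.map' (MvPolynomial.aeval x).toLinearMap (LinearMap.ker_eq_bot.mpr hinj)
  have h3 := h2.comp (Finsupp.equivFunOnFinite.symm : (ι → ℕ) → (ι →₀ ℕ))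
    (Equiv.injective _)
  convert h3 using 2 with e
  simp [MvPolynomial.coe_basisMonomials, MvPolynomial.aeval_monomial,
    Finsupp.prod_fintype _ _ (fun j => pow_zero (x j))]
  all_goals rfl

variable {K : ℕ} (h : Fin K → Fin K → ℝ) (i : Fin K)

/-- The monomial in the channel gains with exponent vector `e`. -/
noncomputable def Mon (e : Fin K × Fin K → ℕ) : ℝ := ∏ p, h p.1 p.2 ^ e p

/-- Extend an off-diagonal exponent vector by `0` on the diagonal. -/
def E0 (s : {p : Fin K × Fin K // p.1 ≠ p.2} → ℕ) : Fin K × Fin K → ℕ :=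
  fun q => if hq : q.1 ≠ q.2 then s ⟨q, hq⟩ else 0

/-- Extend an off-diagonal exponent vector by `1` at `(i,i)` and `0` elsewhere on the
diagonal. -/
def E1 (i : Fin K) (s : {p : Fin K × Fin K // p.1 ≠ p.2} → ℕ) : Fin K × Fin K → ℕ :=
  fun q => if hq : q.1 ≠ q.2 then s ⟨q, hq⟩ else if q = (i, i) then 1 else 0

lemma prod_split (e : Fin K × Fin K → ℕ) :
    Mon h e = (∏ p : {p : Fin K × Fin K // p.1 ≠ p.2}, h p.1.1 p.1.2 ^ e p.1) *
      ∏ q ∈ Finset.univ.filter (fun q : Fin K × Fin K => ¬ q.1 ≠ q.2), h q.1 q.2 ^ e q := by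
  rw [Mon,
    ← Finset.prod_filter_mul_prod_filter_not Finset.univ (fun q : Fin K × Fin K => q.1 ≠ q.2)]
  congr 1
  exact (Finset.prod_subtype _ (by simp) _)

lemma Mon_E0 (s : {p : Fin K × Fin K // p.1 ≠ p.2} → ℕ) :
    Mon h (E0 s) = ∏ p : {p : Fin K × Fin K // p.1 ≠ p.2}, h p.1.1 p.1.2 ^ s p := by
  rw [prod_split]
  have h2 : ∀ q ∈ Finset.univ.filter (fun q : Fin K × Fin K => ¬ q.1 ≠ q.2),
      h q.1 q.2 ^ E0 s q = 1 := by
    intro q hq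
    simp only [Finset.mem_filter] at hq
    rw [E0, dif_neg hq.2, pow_zero]
  rw [Finset.prod_congr rfl h2, Finset.prod_const_one, mul_one]
  exact Finset.prod_congr rfl (fun p _ => by rw [E0, dif_pos p.2])

lemma Mon_E1 (s : {p : Fin K × Fin K // p.1 ≠ p.2} → ℕ) :
    Mon h (E1 i s) = h i i * ∏ p : {p : Fin K × Fin K // p.1 ≠ p.2}, h p.1.1 p.1.2 ^ s p := by
  rw [prod_split]
  have h2 : (∏ q ∈ Finset.univ.filter (fun q : Fin K × Fin K => ¬ q.1 ≠ q.2),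
      h q.1 q.2 ^ E1 i s q) = h i i := by
    rw [Finset.prod_eq_single_of_mem (i, i) (by simp)]
    · rw [E1]; simp
    · intro q hq hne
      simp only [Finset.mem_filter, not_not] at hq
      rw [E1, dif_neg (not_not.mpr hq.2), if_neg hne, pow_zero]
  rw [h2, mul_comm]
  congr 1
  exact Finset.prod_congr rfl (fun p _ => by rw [E1, dif_pos p.2])

end Aux

/-- Separability of signal and interference in the `K`-user GIC: with all `K²` channel
gains algebraically independent over `ℚ`, the received signal directions `h_{ii}·T_i`
and the interference directions `T_r` are disjoint, and their union consists of reals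
linearly independent over `ℚ`. -/
theorem signal_interference_separable (K n : ℕ) (hK : 2 ≤ K) (hn : 1 ≤ n)
    (h : Fin K → Fin K → ℝ)
    (halg : AlgebraicIndependent ℚ (fun p : Fin K × Fin K => h p.1 p.2))
    (i : Fin K) (Ti Tr : Set ℝ)
    (hTi : Ti = (fun s : {p : Fin K × Fin K // p.1 ≠ p.2} → ℕ =>
        ∏ p, h p.1.1 p.1.2 ^ s p) ''
      {s | ∀ p : {p : Fin K × Fin K // p.1 ≠ p.2},
        (p.1.2 = i → s p < n) ∧ (p.1.2 ≠ i → s p ≤ n)})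
    (hTr : Tr = (fun s : {p : Fin K × Fin K // p.1 ≠ p.2} → ℕ =>
        ∏ p, h p.1.1 p.1.2 ^ s p) ''
      {s | ∀ p : {p : Fin K × Fin K // p.1 ≠ p.2}, s p ≤ n}) :
    Disjoint ((h i i * ·) '' Ti) Tr ∧
    LinearIndependent ℚ (fun x : ((h i i * ·) '' Ti ∪ Tr : Set ℝ) => (x : ℝ)) := by
  have hLI : LinearIndependent ℚ (Mon h) :=
    monomials_linearIndependent (fun p : Fin K × Fin K => h p.1 p.2) halg
  have hMinj : Function.Injective (Mon h) := hLI.injective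
  constructor
  · rw [Set.disjoint_left]
    rintro a ⟨t, ht, rfl⟩ haTr
    rw [hTi] at ht
    obtain ⟨s, _, rfl⟩ := ht
    rw [hTr] at haTr
    obtain ⟨s', _, hs'⟩ := haTr
    have heq : Mon h (E0 s') = Mon h (E1 i s) := by
      rw [Mon_E0, Mon_E1]; exact hs'
    have := congrFun (hMinj heq) (i, i)
    simp [E0, E1] at this
  · have hsub : ((h i i * ·) '' Ti ∪ Tr : Set ℝ) ⊆ Set.range (Mon h) := by
      rintro a (⟨t, ht, rfl⟩ | haTr)
      · rw [hTi] at ht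
        obtain ⟨s, _, rfl⟩ := ht
        exact ⟨E1 i s, Mon_E1 h i s⟩
      · rw [hTr] at haTr
        obtain ⟨s, _, rfl⟩ := haTr
        exact ⟨E0 s, Mon_E0 h s⟩
    exact (hLI.linearIndepOn_id.mono hsub).linearIndependent
end
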